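/- Let A : [0,∞) → Matrix (Fin n) (Fin n) ℝ be bounded and continuous, and let Φ be a fundamental matrix of ẋ = A(t)x (Φ'(t) = A(t)Φ(t), Φ(0) = I, Φ(t) invertible) satisfying ‖Φ(t)Φ(s)⁻¹‖ ≤ K e^{-α(t-s)} for all t ≥ s ≥ 0, with constants K ≥ 1 and α > 0 (exponential dichotomy on [0,∞) with projector P = I). Let f : [0,∞) × ℝⁿ → ℝⁿ be continuous in t and C¹ in x, with f(t,x) = 0 if and only if x = 0 (for all t ≥ 0), and suppose the Jacobian of f in x satisfies sup_{t ≥ 0, x ∈ ℝⁿ} ‖D_x f(t,x)‖ < α/(4K²). Then every solution x(·) of ẋ = A(t)x + f(t,x) with x(t₀) = ξ satisfies |x(t)| ≤ K e^{-α(1 - 1/(4K))(t - t₀)} |ξ| for all t ≥ t₀ ≥ 0; in particular the trivial solution is globally uniformly asymptotically stable. -/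

import Mathlib

open Real Set Matrix

attribute [local instance] Matrix.linftyOpNormedRing Matrix.linftyOpNormedSpace

attribute [local instance] Matrix.linftyOpNormedAlgebra

noncomputable def matCLM (n : ℕ) :
    Matrix (Fin n) (Fin n) ℝ →L[ℝ] ((Fin n → ℝ) →L[ℝ] (Fin n → ℝ)) :=
  LinearMap.toContinuousLinearMap <|
    ((LinearMap.toContinuousLinearMap :
        ((Fin n → ℝ) →ₗ[ℝ] (Fin n → ℝ)) ≃ₗ[ℝ] ((Fin n → ℝ) →L[ℝ] (Fin n → ℝ))).toLinearMap).comp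
      (Matrix.toLin' : Matrix (Fin n) (Fin n) ℝ ≃ₗ[ℝ] _).toLinearMap

@[simp] lemma matCLM_apply (n : ℕ) (M : Matrix (Fin n) (Fin n) ℝ) (v : Fin n → ℝ) :
    matCLM n M v = M *ᵥ v := by
  simp [matCLM, Matrix.toLin'_apply]

lemma hasDerivAt_mulVec {n : ℕ} {Φ : ℝ → Matrix (Fin n) (Fin n) ℝ} {x : ℝ → Fin n → ℝ}
    {Φ' : Matrix (Fin n) (Fin n) ℝ} {x' : Fin n → ℝ} {t : ℝ}
    (hΦ : HasDerivAt Φ Φ' t) (hx : HasDerivAt x x' t) :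
    HasDerivAt (fun s => Φ s *ᵥ x s) (Φ' *ᵥ x t + Φ t *ᵥ x') t := by
  have h1 : HasDerivAt (fun s => matCLM n (Φ s)) (matCLM n Φ') t :=
    (matCLM n).hasFDerivAt.comp_hasDerivAt t hΦ
  simpa using h1.clm_apply hx

/-- If `ẋ = A(t)x` has an exponential dichotomy on `[0,∞)` with projector `P = I`
and constants `K ≥ 1`, `α > 0`, and the nonlinearity `f` vanishes exactly at the
origin with Jacobian bounded by `α/(4K²)`, then every solution of
`ẋ = A(t)x + f(t,x)` satisfies `‖x(t)‖ ≤ K e^{-α(1 - 1/(4K))(t-t₀)} ‖ξ‖`;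
the trivial solution is globally uniformly asymptotically stable. -/
theorem perturbed_linear_system_uniform_asymptotic_stability
    (n : ℕ)
    (A : ℝ → Matrix (Fin n) (Fin n) ℝ)
    (hA_cont : ContinuousOn A (Ici 0))
    (hA_bdd : ∃ M : ℝ, ∀ t ≥ (0:ℝ), ‖A t‖ ≤ M)
    (Φ : ℝ → Matrix (Fin n) (Fin n) ℝ)
    (hΦ_deriv : ∀ t : ℝ, HasDerivAt Φ (A t * Φ t) t)
    (hΦ0 : Φ 0 = 1)
    (hΦ_inv : ∀ t : ℝ, IsUnit (Φ t))
    (K α : ℝ) (hK : 1 ≤ K) (hα : 0 < α)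
    (hED : ∀ s t : ℝ, 0 ≤ s → s ≤ t → ‖Φ t * (Φ s)⁻¹‖ ≤ K * exp (-α * (t - s)))
    (f : ℝ → (Fin n → ℝ) → (Fin n → ℝ))
    (Df : ℝ → (Fin n → ℝ) → ((Fin n → ℝ) →L[ℝ] (Fin n → ℝ)))
    (hf_cont : ∀ x : Fin n → ℝ, ContinuousOn (fun t => f t x) (Ici 0))
    (hf_deriv : ∀ t ≥ (0:ℝ), ∀ x : Fin n → ℝ, HasFDerivAt (f t) (Df t x) x)
    (hDf_cont : ∀ t ≥ (0:ℝ), Continuous (Df t))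
    (hf0 : ∀ t ≥ (0:ℝ), ∀ x : Fin n → ℝ, f t x = 0 ↔ x = 0)
    (hDf_small : ∃ c : ℝ, c < α / (4 * K ^ 2) ∧ ∀ t ≥ (0:ℝ), ∀ x : Fin n → ℝ, ‖Df t x‖ ≤ c) :
    ∀ t₀ ≥ (0:ℝ), ∀ (ξ : Fin n → ℝ) (x : ℝ → Fin n → ℝ), x t₀ = ξ →
      (∀ t ≥ t₀, HasDerivAt x (A t *ᵥ x t + f t (x t)) t) →
      ∀ t ≥ t₀, ‖x t‖ ≤ K * exp (-α * (1 - 1 / (4 * K)) * (t - t₀)) * ‖ξ‖ := by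
  intro t₀ ht₀ ξ x hx0 hxd
  obtain ⟨c, hc, hDfc⟩ := hDf_small
  have hK0 : (0:ℝ) < K := lt_of_lt_of_le one_pos hK
  have hc0 : (0:ℝ) ≤ c := le_trans (norm_nonneg _) (hDfc 0 le_rfl 0)
  -- Lipschitz bound on f
  have hLip : ∀ s ≥ (0:ℝ), ∀ u v : Fin n → ℝ, ‖f s u - f s v‖ ≤ c * ‖u - v‖ := by
    intro s hs u v
    exact (convex_univ).norm_image_sub_le_of_norm_hasFDerivWithin_le
      (fun y _ => (hf_deriv s hs y).hasFDerivWithinAt) (fun y _ => hDfc s hs y)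
      (mem_univ v) (mem_univ u)
  have hfb : ∀ s ≥ (0:ℝ), ∀ u : Fin n → ℝ, ‖f s u‖ ≤ c * ‖u‖ := by
    intro s hs u
    have := hLip s hs u 0
    simpa [(hf0 s hs 0).mpr rfl] using this
  -- inverse matrix
  set Ψ : ℝ → Matrix (Fin n) (Fin n) ℝ := fun s => (Φ s)⁻¹ with hΨdef
  have hΨR : ∀ s : ℝ, Ψ s = Ring.inverse (Φ s) := fun s =>
    Matrix.nonsing_inv_eq_ringInverse _
  have hmul : ∀ s, Φ s * Ψ s = 1 := fun s => by
    rw [hΨR]; exact Ring.mul_inverse_cancel _ (hΦ_inv s)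
  have hΨd : ∀ s : ℝ, HasDerivAt Ψ (-(Ψ s * A s)) s := by
    intro s
    obtain ⟨u, hu⟩ := hΦ_inv s
    have h1 : HasFDerivAt Ring.inverse
        (-ContinuousLinearMap.mulLeftRight ℝ (Matrix (Fin n) (Fin n) ℝ) ↑u⁻¹ ↑u⁻¹) (Φ s) := by
      rw [← hu]; exact hasFDerivAt_ringInverse u
    have hui : (↑u⁻¹ : Matrix (Fin n) (Fin n) ℝ) = Ψ s := by
      rw [hΨR, ← hu, Ring.inverse_unit]
    have h2 := h1.comp_hasDerivAt s (hΦ_deriv s)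
    have h3 : (Ring.inverse ∘ Φ : ℝ → Matrix (Fin n) (Fin n) ℝ) = Ψ := by
      funext r; exact (hΨR r).symm
    rw [h3] at h2
    refine h2.congr_deriv ?_
    simp only [ContinuousLinearMap.neg_apply, ContinuousLinearMap.mulLeftRight_apply, hui]
    rw [show Ψ s * (A s * Φ s) * Ψ s = Ψ s * A s * (Φ s * Ψ s) by simp [mul_assoc],
      hmul s, mul_one]
  have hΨc : Continuous Ψ := by
    rw [continuous_iff_continuousAt]; exact fun s => (hΨd s).continuousAt
  -- the transformed function
  set y : ℝ → Fin n → ℝ := fun s => Ψ s *ᵥ x s with hy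
  have hx_cont : ContinuousOn x (Ici t₀) := fun s hs =>
    ((hxd s hs).continuousAt).continuousWithinAt
  have hyd : ∀ s ≥ t₀, HasDerivAt y (Ψ s *ᵥ f s (x s)) s := by
    intro s hs
    have h := hasDerivAt_mulVec (hΨd s) (hxd s hs)
    convert h using 1
    rw [Matrix.mulVec_add, Matrix.neg_mulVec, Matrix.mulVec_mulVec]
    abel
  -- continuity of s ↦ f s (x s) on [t₀, ∞)
  have hfx_cont : ContinuousOn (fun s => f s (x s)) (Ici t₀) := by
    intro s₀ hs₀
    have hxc : ContinuousAt x s₀ := (hxd s₀ hs₀).continuousAt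
    have h1 : Filter.Tendsto (fun s => f s (x s₀)) (nhdsWithin s₀ (Ici t₀))
        (nhds (f s₀ (x s₀))) :=
      (hf_cont (x s₀) s₀ (le_trans ht₀ hs₀)).mono_left
        (nhdsWithin_mono _ (Ici_subset_Ici.mpr ht₀))
    have h2 : Filter.Tendsto (fun s => f s (x s) - f s (x s₀)) (nhdsWithin s₀ (Ici t₀))
        (nhds 0) := by
      have hb : ∀ᶠ s in nhdsWithin s₀ (Ici t₀), ‖f s (x s) - f s (x s₀)‖ ≤ c * ‖x s - x s₀‖ := by
        filter_upwards [self_mem_nhdsWithin] with s hs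
        exact hLip s (le_trans ht₀ hs) (x s) (x s₀)
      have ht : Filter.Tendsto (fun s => c * ‖x s - x s₀‖) (nhdsWithin s₀ (Ici t₀)) (nhds 0) := by
        have : Filter.Tendsto (fun s => x s - x s₀) (nhdsWithin s₀ (Ici t₀)) (nhds 0) := by
          have := (hxc.continuousWithinAt (s := Ici t₀)).sub_const (x s₀)
          simpa using this
        simpa using (this.norm.const_mul c)
      exact squeeze_zero_norm' hb ht
    have h3 := h2.add h1
    simp only [zero_add] at h3
    unfold ContinuousWithinAt
    convert h3 using 2 with s
    abel
  have hg_cont : ContinuousOn (fun s => Ψ s *ᵥ f s (x s)) (Ici t₀) := by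
    have h := ContinuousOn.clm_apply (((matCLM n).continuous.comp hΨc).continuousOn) hfx_cont
    simpa using h
  -- the key integral inequality
  have key : ∀ t, t₀ ≤ t → ‖x t‖ ≤ K * exp (-α * (t - t₀)) * ‖ξ‖ +
      ∫ s in t₀..t, K * c * exp (-α * (t - s)) * ‖x s‖ := by
    intro t ht
    have hsub : uIcc t₀ t ⊆ Ici t₀ := by
      rw [uIcc_of_le ht]; exact Icc_subset_Ici_self
    have hint_g : IntervalIntegrable (fun s => Ψ s *ᵥ f s (x s)) MeasureTheory.volume t₀ t :=
      (hg_cont.mono hsub).intervalIntegrable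
    have hFTC : (∫ s in t₀..t, Ψ s *ᵥ f s (x s)) = y t - y t₀ :=
      intervalIntegral.integral_eq_sub_of_hasDerivAt
        (fun s hs => hyd s (by rw [uIcc_of_le ht] at hs; exact hs.1)) hint_g
    have hxy : ∀ r, Φ r *ᵥ y r = x r := by
      intro r
      rw [hy]
      simp only [Matrix.mulVec_mulVec, hmul r, Matrix.one_mulVec]
    have hxeq : x t = (Φ t * Ψ t₀) *ᵥ ξ + ∫ s in t₀..t, (Φ t * Ψ s) *ᵥ f s (x s) := by
      have h4 : y t = y t₀ + ∫ s in t₀..t, Ψ s *ᵥ f s (x s) := by rw [hFTC]; abel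
      have h5 := congrArg (fun v => Φ t *ᵥ v) h4
      rw [hxy t] at h5
      rw [h5, Matrix.mulVec_add]
      congr 1
      · rw [hy]; simp only [Matrix.mulVec_mulVec, hx0]
      · have h6 := (matCLM n (Φ t)).intervalIntegral_comp_comm hint_g
        calc Φ t *ᵥ ∫ s in t₀..t, Ψ s *ᵥ f s (x s)
            = matCLM n (Φ t) (∫ s in t₀..t, Ψ s *ᵥ f s (x s)) := by simp
          _ = ∫ s in t₀..t, matCLM n (Φ t) (Ψ s *ᵥ f s (x s)) := h6.symm
          _ = ∫ s in t₀..t, (Φ t * Ψ s) *ᵥ f s (x s) := by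
              congr 1; funext s; simp [Matrix.mulVec_mulVec]
    rw [hxeq]
    refine le_trans (norm_add_le _ _) (add_le_add ?_ ?_)
    · calc ‖(Φ t * Ψ t₀) *ᵥ ξ‖ ≤ ‖Φ t * Ψ t₀‖ * ‖ξ‖ := Matrix.linfty_opNorm_mulVec _ _
        _ ≤ (K * exp (-α * (t - t₀))) * ‖ξ‖ :=
          mul_le_mul_of_nonneg_right (hED t₀ t ht₀ ht) (norm_nonneg _)
        _ = K * exp (-α * (t - t₀)) * ‖ξ‖ := by ring
    · have hcont1 : Continuous (fun s : ℝ => K * c * exp (-α * (t - s))) := by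
        fun_prop
      have hboundint : IntervalIntegrable (fun s => K * c * exp (-α * (t - s)) * ‖x s‖)
          MeasureTheory.volume t₀ t :=
        ((hcont1.continuousOn).mul ((hx_cont.mono hsub).norm)).intervalIntegrable
      have habs : |∫ s in t₀..t, K * c * exp (-α * (t - s)) * ‖x s‖| =
          ∫ s in t₀..t, K * c * exp (-α * (t - s)) * ‖x s‖ := by
        apply abs_of_nonneg
        apply intervalIntegral.integral_nonneg ht
        intro u hu
        positivity
      refine intervalIntegral.norm_integral_le_of_norm_le ht ?_ hboundint
      · refine MeasureTheory.ae_of_all _ fun s hs => ?_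
        have hs0 : (0:ℝ) ≤ s := le_trans ht₀ (le_of_lt hs.1)
        calc ‖(Φ t * Ψ s) *ᵥ f s (x s)‖ ≤ ‖Φ t * Ψ s‖ * ‖f s (x s)‖ :=
            Matrix.linfty_opNorm_mulVec _ _
          _ ≤ (K * exp (-α * (t - s))) * (c * ‖x s‖) := by
            apply mul_le_mul (hED s t hs0 hs.2) (hfb s hs0 (x s)) (norm_nonneg _)
            positivity
          _ = K * c * exp (-α * (t - s)) * ‖x s‖ := by ring
    -- Gronwall step
  set v : ℝ → ℝ := fun s => exp (α * (s - t₀)) * ‖x s‖ with hv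
  have hv_cont : ContinuousOn v (Ici t₀) :=
    (Continuous.continuousOn (by fun_prop)).mul hx_cont.norm
  have hv0 : ∀ s, 0 ≤ v s := fun s => by positivity
  have key2 : ∀ t, t₀ ≤ t → v t ≤ K * ‖ξ‖ + ∫ s in t₀..t, K * c * v s := by
    intro t ht
    have h := key t ht
    have h2 := mul_le_mul_of_nonneg_left h (le_of_lt (exp_pos (α * (t - t₀))))
    have e1 : exp (α * (t - t₀)) * (K * exp (-α * (t - t₀)) * ‖ξ‖) = K * ‖ξ‖ := by
      rw [show exp (α * (t - t₀)) * (K * exp (-α * (t - t₀)) * ‖ξ‖)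
          = (exp (α * (t - t₀)) * exp (-α * (t - t₀))) * (K * ‖ξ‖) by ring, ← exp_add]
      norm_num
    have e2 : exp (α * (t - t₀)) * (∫ s in t₀..t, K * c * exp (-α * (t - s)) * ‖x s‖)
        = ∫ s in t₀..t, K * c * v s := by
      rw [← intervalIntegral.integral_const_mul]
      apply intervalIntegral.integral_congr
      intro s _
      simp only [hv]
      rw [show exp (α * (t - t₀)) * (K * c * exp (-α * (t - s)) * ‖x s‖)
          = (exp (α * (t - t₀)) * exp (-α * (t - s))) * (K * c * ‖x s‖) by ring, ← exp_add,
        show α * (t - t₀) + -α * (t - s) = α * (s - t₀) by ring]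
      ring
    rw [mul_add, e1, e2] at h2
    exact h2
  intro T hT
  set W : ℝ → ℝ := fun t => K * ‖ξ‖ + ∫ s in t₀..t, K * c * v s with hW
  have hKξ : (0:ℝ) ≤ K * ‖ξ‖ := by positivity
  have hvint : ∀ t, t₀ ≤ t → IntervalIntegrable (fun s => K * c * v s)
      MeasureTheory.volume t₀ t := by
    intro t ht
    apply ContinuousOn.intervalIntegrable
    apply (continuousOn_const.mul (hv_cont.mono ?_))
    rw [uIcc_of_le ht]; exact Icc_subset_Ici_self
  have hWnonneg : ∀ t, t₀ ≤ t → 0 ≤ W t := by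
    intro t ht
    have : 0 ≤ ∫ s in t₀..t, K * c * v s :=
      intervalIntegral.integral_nonneg ht (fun u _ => by positivity)
    simp only [hW]; linarith
  have hWc : ContinuousOn W (Icc t₀ T) := by
    apply continuousOn_const.add
    have h := intervalIntegral.continuousOn_primitive_interval
      (f := fun s => K * c * v s) (a := t₀) (b := T) (μ := MeasureTheory.volume) ?_
    · rwa [uIcc_of_le hT] at h
    · rw [uIcc_of_le hT]
      apply ContinuousOn.integrableOn_Icc
      exact continuousOn_const.mul (hv_cont.mono Icc_subset_Ici_self)
  have hW' : ∀ s ∈ Ico t₀ T, HasDerivWithinAt W (K * c * v s) (Ici s) s := by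
    intro s hs
    apply HasDerivWithinAt.const_add
    have hmeas : StronglyMeasurableAtFilter (fun r => K * c * v r) (nhdsWithin s (Ioi s))
        MeasureTheory.volume := by
      refine ⟨Ici t₀, ?_, ?_⟩
      · exact Filter.mem_of_superset self_mem_nhdsWithin
          (fun r hr => le_trans hs.1 (le_of_lt hr))
      · exact (continuousOn_const.mul hv_cont).aestronglyMeasurable measurableSet_Ici
    exact intervalIntegral.integral_hasDerivWithinAt_right (hvint s hs.1) hmeas
      (((continuousOn_const.mul hv_cont) s hs.1).mono
        (fun r hr => le_trans hs.1 (le_of_lt hr)))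
  have hW0 : ‖W t₀‖ ≤ K * ‖ξ‖ := by
    simp only [hW, intervalIntegral.integral_same, add_zero]
    rw [Real.norm_eq_abs, abs_of_nonneg hKξ]
  have hbd : ∀ s ∈ Ico t₀ T, ‖K * c * v s‖ ≤ (K * c) * ‖W s‖ + 0 := by
    intro s hs
    rw [Real.norm_eq_abs, abs_of_nonneg (by positivity), Real.norm_eq_abs,
      abs_of_nonneg (hWnonneg s hs.1), add_zero]
    apply mul_le_mul_of_nonneg_left _ (by positivity)
    exact key2 s hs.1
  have hgb := norm_le_gronwallBound_of_norm_deriv_right_le hWc hW' hW0 hbd T ⟨hT, le_rfl⟩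
  rw [gronwallBound_ε0, Real.norm_eq_abs, abs_of_nonneg (hWnonneg T hT)] at hgb
  have hvW : v T ≤ W T := key2 T hT
  have hxT : ‖x T‖ = exp (-α * (T - t₀)) * v T := by
    simp only [hv]
    rw [← mul_assoc, ← exp_add]
    norm_num
  have hfinal : ‖x T‖ ≤ K * exp ((K * c - α) * (T - t₀)) * ‖ξ‖ := by
    rw [hxT]
    calc exp (-α * (T - t₀)) * v T ≤ exp (-α * (T - t₀)) * (K * ‖ξ‖ * exp (K * c * (T - t₀))) :=
          mul_le_mul_of_nonneg_left (le_trans hvW hgb) (le_of_lt (exp_pos _))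
      _ = K * (exp (-α * (T - t₀)) * exp (K * c * (T - t₀))) * ‖ξ‖ := by ring
      _ = K * exp ((K * c - α) * (T - t₀)) * ‖ξ‖ := by
          rw [← exp_add, show -α * (T - t₀) + K * c * (T - t₀) = (K * c - α) * (T - t₀) by ring]
  refine le_trans hfinal ?_
  apply mul_le_mul_of_nonneg_right _ (norm_nonneg ξ)
  apply mul_le_mul_of_nonneg_left _ (le_of_lt hK0)
  apply exp_le_exp.mpr
  apply mul_le_mul_of_nonneg_right _ (by linarith : (0:ℝ) ≤ T - t₀)
  have hKc : K * c < α / (4 * K) := by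
    have h := (mul_lt_mul_of_pos_left hc hK0)
    calc K * c < K * (α / (4 * K ^ 2)) := h
      _ = α / (4 * K) := by field_simp
  have heq : -α * (1 - 1 / (4 * K)) = α / (4 * K) - α := by field_simp; ring
  rw [heq]
  linarith
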